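/- In the Petersen graph GP(5,2), no single edge of the all-spokes perfect matching M_6 = {u_iv_i : 0 ≤ i ≤ 4} is a forcing set of M_6; that is, f(GP(5,2), M_6) ≥ 2. -/

import Mathlib

open SimpleGraph

/-- The generalized Petersen graph `GP(n,k)`: vertices `u i = Sum.inl i`,
`v i = Sum.inr i`, edges `u i -- u (i+k)`, `u i -- v i`, `v i -- v (i+1)` (mod n). -/
def GP (n k : ℕ) : SimpleGraph (Fin n ⊕ Fin n) :=
  SimpleGraph.fromRel (fun a b =>
    match a, b with
    | Sum.inl i, Sum.inl j => (j : ℕ) = ((i : ℕ) + k) % n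
    | Sum.inl i, Sum.inr j => i = j
    | Sum.inr i, Sum.inr j => (j : ℕ) = ((i : ℕ) + 1) % n
    | _, _ => False)

/-- `S` is a forcing set of the perfect matching `M` of `G`:
`S` consists of edges of `M` and `M` is the unique perfect matching containing `S`. -/
def IsForcingSet {V : Type*} (G : SimpleGraph V) (M : G.Subgraph) (S : Set (Sym2 V)) : Prop :=
  S ⊆ M.edgeSet ∧
    ∀ M' : G.Subgraph, M'.IsPerfectMatching → S ⊆ M'.edgeSet → M' = M

/-- The forcing number `f(G,M)`: minimum cardinality of a forcing set of `M`. -/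
noncomputable def forcingNum {V : Type*} (G : SimpleGraph V) (M : G.Subgraph) : ℕ :=
  sInf {k | ∃ S : Set (Sym2 V), IsForcingSet G M S ∧ S.ncard = k}

/-- A cycle `p` of `G` is `M`-alternating: its edges lie alternately in `M` and outside `M`.
For a perfect matching `M` this is equivalent to saying that every vertex of the
cycle is covered by an edge of `M` lying on the cycle. -/
def IsAltCycle {V : Type*} (G : SimpleGraph V) (M : G.Subgraph) {v : V} (p : G.Walk v v) : Prop :=
  p.IsCycle ∧ ∀ u ∈ p.support, ∃ e ∈ p.edges, e ∈ M.edgeSet ∧ u ∈ e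

/-- `C(G,M)`: the maximum number of pairwise vertex-disjoint `M`-alternating cycles of `G`. -/
noncomputable def maxDisjAltCycles {V : Type*} (G : SimpleGraph V) (M : G.Subgraph) : ℕ :=
  sSup {k | ∃ c : Fin k → Σ v : V, G.Walk v v,
    (∀ i, IsAltCycle G M (c i).2) ∧
    Pairwise fun i j => List.Disjoint (c i).2.support (c j).2.support}

abbrev V5 := Fin 5 ⊕ Fin 5

def relB : V5 → V5 → Bool
  | Sum.inl i, Sum.inl j => (j : ℕ) == ((i : ℕ) + 2) % 5
  | Sum.inl i, Sum.inr j => i == j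
  | Sum.inr i, Sum.inr j => (j : ℕ) == ((i : ℕ) + 1) % 5
  | _, _ => false

lemma gp_adj (a b : V5) : (GP 5 2).Adj a b ↔ a ≠ b ∧ (relB a b ∨ relB b a) := by
  cases a <;> cases b <;> simp [GP, SimpleGraph.fromRel_adj, relB]

def pmEdges (i : Fin 5) : List (V5 × V5) :=
  [(Sum.inl i, Sum.inr i), (Sum.inl (i+1), Sum.inl (i+3)), (Sum.inl (i+2), Sum.inl (i+4)),
   (Sum.inr (i+1), Sum.inr (i+2)), (Sum.inr (i+3), Sum.inr (i+4))]

def pmAdj (i : Fin 5) (a b : V5) : Bool :=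
  (pmEdges i).any (fun p => (p.1 == a && p.2 == b) || (p.1 == b && p.2 == a))

def spAdj : V5 → V5 → Bool
  | Sum.inl i, Sum.inr j => i == j
  | Sum.inr i, Sum.inl j => i == j
  | _, _ => false

lemma pmAdj_sub : ∀ (i : Fin 5) (a b : V5), pmAdj i a b → (a ≠ b ∧ (relB a b ∨ relB b a)) := by
  decide

lemma spAdj_sub : ∀ (a b : V5), spAdj a b → (a ≠ b ∧ (relB a b ∨ relB b a)) := by decide

def pm (i : Fin 5) : (GP 5 2).Subgraph where
  verts := Set.univ
  Adj a b := pmAdj i a b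
  adj_sub := fun {a b} h => (gp_adj a b).mpr (pmAdj_sub i a b h)
  edge_vert := fun _ => Set.mem_univ _
  symm := by constructor; intro a b h; revert h; revert a b; revert i; decide

def pmS : (GP 5 2).Subgraph where
  verts := Set.univ
  Adj a b := spAdj a b
  adj_sub := fun {a b} h => (gp_adj a b).mpr (spAdj_sub a b h)
  edge_vert := fun _ => Set.mem_univ _
  symm := by constructor; intro a b h; revert h; revert a b; decide

lemma pm_matching' : ∀ (i : Fin 5) (v : V5), ∃ w, pmAdj i v w = true ∧
    ∀ y, pmAdj i v y = true → y = w := by decide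

lemma pm_matching : ∀ (i : Fin 5) (v : V5), ∃! w, pmAdj i v w = true := pm_matching'

lemma sp_matching' : ∀ (v : V5), ∃ w, spAdj v w = true ∧
    ∀ y, spAdj v y = true → y = w := by decide

lemma sp_matching : ∀ (v : V5), ∃! w, spAdj v w = true := sp_matching'

lemma pm_perfect (i : Fin 5) : (pm i).IsPerfectMatching :=
  ⟨fun v _ => pm_matching i v, fun v => Set.mem_univ v⟩

lemma sp_perfect : pmS.IsPerfectMatching :=
  ⟨fun v _ => sp_matching v, fun v => Set.mem_univ v⟩

lemma sp_char : ∀ a b : V5,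
    (∃ i : Fin 5, s(a,b) = s((Sum.inl i : V5), Sum.inr i)) ↔ spAdj a b = true := by decide

lemma M6_eq (M₆ : (GP 5 2).Subgraph) (hv : M₆.verts = Set.univ)
    (he : M₆.edgeSet = {e | ∃ i : Fin 5, e = s((Sum.inl i : V5), Sum.inr i)}) :
    M₆ = pmS := by
  apply SimpleGraph.Subgraph.ext
  · exact hv
  · funext a b
    have h1 : M₆.Adj a b ↔ s(a,b) ∈ M₆.edgeSet := (SimpleGraph.Subgraph.mem_edgeSet).symm
    rw [he] at h1
    apply propext
    rw [h1]
    exact sp_char a b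

lemma pm_spoke : ∀ i : Fin 5, pmAdj i (Sum.inl i) (Sum.inr i) = true := by decide

lemma pm_ne : ∀ i : Fin 5, pmAdj i (Sum.inl (i+1)) (Sum.inl (i+3)) = true ∧
    spAdj (Sum.inl (i+1)) (Sum.inl (i+3)) = false := by decide

lemma pm_ne_sp (i : Fin 5) : pm i ≠ pmS := by
  intro h
  have h2 : (pm i).Adj (Sum.inl (i+1)) (Sum.inl (i+3)) := (pm_ne i).1
  rw [h] at h2
  have h3 : spAdj (Sum.inl (i+1)) (Sum.inl (i+3)) = true := h2
  rw [(pm_ne i).2] at h3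
  exact Bool.noConfusion h3

lemma sp_unique (M' : (GP 5 2).Subgraph) (h : M'.IsPerfectMatching)
    (hs : pmS.edgeSet ⊆ M'.edgeSet) : M' = pmS := by
  apply SimpleGraph.Subgraph.ext
  · exact (SimpleGraph.Subgraph.isSpanning_iff).mp h.2
  · funext a b
    apply propext
    constructor
    · intro hab
      obtain ⟨w, hw, -⟩ := sp_matching a
      have hw2 : M'.Adj a w :=
        SimpleGraph.Subgraph.mem_edgeSet.mp (hs (SimpleGraph.Subgraph.mem_edgeSet.mpr hw))
      obtain ⟨w', hw1, hu⟩ := h.1 (h.2 a)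
      have hbw : b = w := (hu b hab).trans (hu w hw2).symm
      show spAdj a b = true
      rw [hbw]
      exact hw
    · intro hab
      exact SimpleGraph.Subgraph.mem_edgeSet.mp (hs (SimpleGraph.Subgraph.mem_edgeSet.mpr hab))


theorem stmt8 (M₆ : (GP 5 2).Subgraph) (hv : M₆.verts = Set.univ)
    (he : M₆.edgeSet = {e | ∃ i : Fin 5, e = s((Sum.inl i : Fin 5 ⊕ Fin 5), Sum.inr i)}) :
    (∀ e ∈ M₆.edgeSet, ¬ IsForcingSet (GP 5 2) M₆ {e}) ∧
    2 ≤ forcingNum (GP 5 2) M₆ := by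
  have hM : M₆ = pmS := M6_eq M₆ hv he
  subst hM
  have key : ∀ e ∈ pmS.edgeSet, ¬ IsForcingSet (GP 5 2) pmS {e} := by
    intro e hee hF
    rw [he] at hee
    obtain ⟨i, rfl⟩ := hee
    have h1 : pm i = pmS := hF.2 (pm i) (pm_perfect i) (by
      intro x hx
      rw [Set.mem_singleton_iff] at hx
      subst hx
      exact SimpleGraph.Subgraph.mem_edgeSet.mpr (pm_spoke i))
    exact pm_ne_sp i h1
  refine ⟨key, ?_⟩
  have hforce : IsForcingSet (GP 5 2) pmS pmS.edgeSet :=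
    ⟨subset_rfl, fun M' hM' hsub => sp_unique M' hM' hsub⟩
  have hne : {k | ∃ S : Set (Sym2 (Fin 5 ⊕ Fin 5)),
      IsForcingSet (GP 5 2) pmS S ∧ S.ncard = k}.Nonempty :=
    ⟨pmS.edgeSet.ncard, pmS.edgeSet, hforce, rfl⟩
  by_contra hc
  push_neg at hc
  unfold forcingNum at hc
  obtain ⟨S, hS, hcard⟩ := Nat.sInf_mem hne
  have hle : S.ncard = 0 ∨ S.ncard = 1 := by omega
  rcases hle with h0 | h1
  · have hSe : S = ∅ := (Set.ncard_eq_zero (Set.toFinite S)).mp h0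
    subst hSe
    exact pm_ne_sp 0 (hS.2 (pm 0) (pm_perfect 0) (Set.empty_subset _))
  · obtain ⟨e, rfl⟩ := Set.ncard_eq_one.mp h1
    exact key e (hS.1 (Set.mem_singleton e)) hS
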